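/- Let G be a simple graph on n vertices with m edges and maximum subgraph spectral density t = t(G). If k ≥ 2·m^{1/3}/(1−t)^{2/3} or m ≥ (2n)^{3/2}/(1−t), then BC_k(G) holds. -/

import Mathlib

open Finset

namespace Brouwer

variable {V : Type*}

/-- The sum of the `k` largest values of `f` on a finite type, expressed as the
supremum over all `k`-element subsets of the sum of `f` over the subset. -/
noncomputable def sumKLargest [Fintype V] (f : V → ℝ) (k : ℕ) : ℝ :=
  sSup { x : ℝ | ∃ T : Finset V, T.card = k ∧ ∑ i ∈ T, f i = x }

/-- The Laplacian matrix of a finite simple graph is Hermitian (real symmetric). -/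
theorem lapMatrix_isHermitian [Fintype V] [DecidableEq V] (G : SimpleGraph V)
    [DecidableRel G.Adj] : (G.lapMatrix ℝ).IsHermitian := by
  rw [Matrix.IsHermitian, Matrix.conjTranspose_eq_transpose_of_trivial]
  exact G.isSymm_lapMatrix ℝ

/-- The adjacency matrix of a finite simple graph is Hermitian (real symmetric). -/
theorem adjMatrix_isHermitian [Fintype V] [DecidableEq V] (G : SimpleGraph V)
    [DecidableRel G.Adj] : (G.adjMatrix ℝ).IsHermitian := by
  rw [Matrix.IsHermitian, Matrix.conjTranspose_eq_transpose_of_trivial]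
  exact G.isSymm_adjMatrix

/-- The (multiset of) eigenvalues of the Laplacian matrix of `G`, indexed by vertices. -/
noncomputable def lapEig [Fintype V] [DecidableEq V] (G : SimpleGraph V) : V → ℝ := by
  classical exact (lapMatrix_isHermitian G).eigenvalues

/-- The (multiset of) eigenvalues of the adjacency matrix of `G`, indexed by vertices. -/
noncomputable def adjEig [Fintype V] [DecidableEq V] (G : SimpleGraph V) : V → ℝ := by
  classical exact (adjMatrix_isHermitian G).eigenvalues

/-- `sLap G k` is `s_k(G)`, the sum of the `k` largest Laplacian eigenvalues of `G`. -/
noncomputable def sLap [Fintype V] [DecidableEq V] (G : SimpleGraph V) (k : ℕ) : ℝ :=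
  sumKLargest (lapEig G) k

/-- The number of edges of `G`. -/
noncomputable def numEdges [Fintype V] (G : SimpleGraph V) : ℕ := by
  classical exact G.edgeFinset.card

/-- `BC G k`: Brouwer's conjectured inequality `s_k(G) ≤ m + (k+1 choose 2)`. -/
def BC [Fintype V] [DecidableEq V] (G : SimpleGraph V) (k : ℕ) : Prop :=
  sLap G k ≤ numEdges G + (k + 1).choose 2

/-- Number of edges of `G` with both endpoints in `S`. -/
noncomputable def edgesWithin [Fintype V] [DecidableEq V] (G : SimpleGraph V)
    (S : Finset V) : ℕ := by
  classical exact (G.edgeFinset.filter (fun e => ∀ v ∈ e, v ∈ S)).card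

/-- The adjacency spectral radius of `G`, i.e. the largest adjacency eigenvalue. -/
noncomputable def specRad [Fintype V] [DecidableEq V] (G : SimpleGraph V) : ℝ :=
  sumKLargest (adjEig G) 1

/-- The maximum subgraph spectral density `t(G)`:
the supremum of `ρ(G[S])/|S|` over nonempty vertex subsets `S`. -/
noncomputable def maxDensity [Fintype V] [DecidableEq V] (G : SimpleGraph V) : ℝ :=
  sSup { x : ℝ | ∃ S : Finset V, S.Nonempty ∧
    x = specRad (G.induce (↑S : Set V)) / (S.card : ℝ) }

/-- Edge-edit distance between two graphs on the same vertex set. -/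
noncomputable def editDistance [Fintype V] (G H : SimpleGraph V) : ℕ := by
  classical exact (symmDiff G.edgeFinset H.edgeFinset).card

/-- A split graph: the vertex set partitions into a clique and an independent set. -/
def IsSplit (G : SimpleGraph V) : Prop :=
  ∃ C : Set V, G.IsClique C ∧ Gᶜ.IsClique Cᶜ

/-- The splittance of `G`: the least number of edge edits needed to reach a split graph. -/
noncomputable def splittance [Fintype V] (G : SimpleGraph V) : ℕ :=
  sInf { d : ℕ | ∃ H : SimpleGraph V, IsSplit H ∧ editDistance G H = d }

/-- The join `G + K₁` of `G` with one new vertex adjacent to every vertex of `G`. -/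
def joinOne (G : SimpleGraph V) : SimpleGraph (Option V) where
  Adj x y := x ≠ y ∧ ∀ a, x = some a → ∀ b, y = some b → G.Adj a b
  symm := by
    constructor
    rintro x y ⟨hxy, h⟩
    exact ⟨hxy.symm, fun a ha b hb => (h b hb a ha).symm⟩
  loopless := by constructor; rintro x ⟨hxx, -⟩; exact hxx rfl


set_option linter.unusedSectionVars false
set_option maxHeartbeats 1000000

section Aux

open Matrix

variable {V : Type*} [Fintype V] [DecidableEq V]

section Spec

variable {M : Matrix V V ℝ} (hM : M.IsHermitian)

/-- entries of the i-th eigenvector -/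
noncomputable def evec (i u : V) : ℝ := hM.eigenvectorBasis i u

/-- the matrix whose rows are the eigenvectors -/
noncomputable def Wmat : Matrix V V ℝ := Matrix.of (fun i u => evec hM i u)

lemma evec_ortho (i j : V) :
    ∑ u, evec hM i u * evec hM j u = if i = j then 1 else 0 := by
  have h := orthonormal_iff_ite.mp hM.eigenvectorBasis.orthonormal i j
  rw [PiLp.inner_apply] at h
  simpa [evec, RCLike.inner_apply, starRingEnd_apply, mul_comm] using h

lemma evec_mul (i u : V) : (M *ᵥ evec hM i) u = hM.eigenvalues i * evec hM i u := by
  have h := hM.mulVec_eigenvectorBasis i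
  have := congrFun h u
  have e : evec hM i = fun u => hM.eigenvectorBasis i u := rfl
  rw [e]
  simpa [evec] using this

lemma Wmat_mul_transpose : Wmat hM * (Wmat hM)ᵀ = 1 := by
  ext i j
  simp [Wmat, Matrix.mul_apply, Matrix.one_apply, evec_ortho hM i j]

lemma transpose_mul_Wmat : (Wmat hM)ᵀ * Wmat hM = 1 :=
  mul_eq_one_comm.mp (Wmat_mul_transpose hM)

lemma evec_dual (u v : V) :
    ∑ i, evec hM i u * evec hM i v = if u = v then 1 else 0 := by
  have := congrFun (congrFun (transpose_mul_Wmat hM) u) v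
  simpa [Wmat, Matrix.mul_apply, Matrix.one_apply, mul_comm] using this

lemma spec_decomp : M = (Wmat hM)ᵀ * Matrix.diagonal hM.eigenvalues * Wmat hM := by
  have h1 : M * (Wmat hM)ᵀ = (Wmat hM)ᵀ * Matrix.diagonal hM.eigenvalues := by
    ext u i
    have := evec_mul hM i u
    rw [Matrix.mulVec, dotProduct] at this
    simp only [Matrix.mul_apply, Matrix.transpose_apply, Matrix.mul_apply,
      Matrix.diagonal_apply, Wmat, Matrix.of_apply]
    have h2 : ∑ x, evec hM x u * (if x = i then hM.eigenvalues x else 0)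
        = evec hM i u * hM.eigenvalues i := by simp
    rw [h2, mul_comm]
    exact this
  calc M = M * ((Wmat hM)ᵀ * Wmat hM) := by rw [transpose_mul_Wmat, Matrix.mul_one]
    _ = (M * (Wmat hM)ᵀ) * Wmat hM := by rw [Matrix.mul_assoc]
    _ = (Wmat hM)ᵀ * Matrix.diagonal hM.eigenvalues * Wmat hM := by rw [h1]

lemma quad_form (x : V → ℝ) :
    x ⬝ᵥ (M *ᵥ x) = ∑ i, hM.eigenvalues i * (∑ u, evec hM i u * x u) ^ 2 := by
  have hy : ∀ i, (Wmat hM *ᵥ x) i = ∑ u, evec hM i u * x u := by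
    intro i; simp [Wmat, Matrix.mulVec, dotProduct]
  conv_lhs => rw [spec_decomp hM, Matrix.mul_assoc, ← Matrix.mulVec_mulVec]
  rw [dotProduct_mulVec x, Matrix.vecMul_transpose, ← Matrix.mulVec_mulVec]
  rw [dotProduct]
  refine Finset.sum_congr rfl fun i _ => ?_
  rw [Matrix.mulVec_diagonal, hy i]; ring

lemma parseval (x : V → ℝ) :
    ∑ i, (∑ u, evec hM i u * x u) ^ 2 = ∑ u, (x u) ^ 2 := by
  have hy : ∀ i, (Wmat hM *ᵥ x) i = ∑ u, evec hM i u * x u := by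
    intro i; simp [Wmat, Matrix.mulVec, dotProduct]
  have h : (Wmat hM *ᵥ x) ⬝ᵥ (Wmat hM *ᵥ x) = x ⬝ᵥ x := by
    rw [dotProduct_mulVec (Wmat hM *ᵥ x), ← Matrix.mulVec_transpose,
      Matrix.mulVec_mulVec, transpose_mul_Wmat, Matrix.one_mulVec]
  calc ∑ i, (∑ u, evec hM i u * x u) ^ 2
      = (Wmat hM *ᵥ x) ⬝ᵥ (Wmat hM *ᵥ x) := by
        rw [dotProduct]; exact Finset.sum_congr rfl fun i _ => by rw [hy i, sq]
    _ = x ⬝ᵥ x := h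
    _ = ∑ u, (x u) ^ 2 := by rw [dotProduct]; exact Finset.sum_congr rfl fun u _ => (sq _).symm

lemma trace_sq : ∑ u, ∑ v, (M u v) ^ 2 = ∑ i, hM.eigenvalues i ^ 2 := by
  have hMt : Mᵀ = M := by
    have := hM; rwa [Matrix.IsHermitian, Matrix.conjTranspose_eq_transpose_of_trivial] at this
  have h1 : ∑ u, ∑ v, (M u v) ^ 2 = (M * M).trace := by
    rw [Matrix.trace]
    refine Finset.sum_congr rfl fun u _ => ?_
    rw [Matrix.diag_apply, Matrix.mul_apply]
    refine Finset.sum_congr rfl fun v _ => ?_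
    have hsym : M u v = M v u := congrFun (congrFun hMt v) u
    rw [sq]
    conv_rhs => rw [← hsym]
  rw [h1]
  have e1 : M * M = (Wmat hM)ᵀ * (Matrix.diagonal hM.eigenvalues *
      (Matrix.diagonal hM.eigenvalues * Wmat hM)) := by
    conv_lhs => rw [spec_decomp hM]
    simp only [Matrix.mul_assoc]
    rw [← Matrix.mul_assoc (Wmat hM) (Wmat hM)ᵀ, Wmat_mul_transpose, Matrix.one_mul]
  rw [e1, Matrix.trace_mul_comm]
  simp only [Matrix.mul_assoc]
  rw [Wmat_mul_transpose, Matrix.mul_one, Matrix.diagonal_mul_diagonal, Matrix.trace_diagonal]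
  exact Finset.sum_congr rfl fun i _ => (sq _).symm

end Spec

section Defs

lemma bddAbove_sumK (f : V → ℝ) (k : ℕ) :
    BddAbove { x : ℝ | ∃ T : Finset V, T.card = k ∧ ∑ i ∈ T, f i = x } := by
  apply Set.Finite.bddAbove
  apply Set.Finite.subset (Set.finite_range (fun T : Finset V => ∑ i ∈ T, f i))
  rintro x ⟨T, -, rfl⟩
  exact ⟨T, rfl⟩

lemma le_sumKLargest (f : V → ℝ) {k : ℕ} {T : Finset V} (hT : T.card = k) :
    ∑ i ∈ T, f i ≤ sumKLargest f k :=
  le_csSup (bddAbove_sumK f k) ⟨T, hT, rfl⟩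

lemma sumKLargest_le (f : V → ℝ) {k : ℕ} (hk : k ≤ Fintype.card V) {B : ℝ}
    (h : ∀ T : Finset V, T.card = k → ∑ i ∈ T, f i ≤ B) : sumKLargest f k ≤ B := by
  obtain ⟨T, -, hT⟩ := Finset.exists_subset_card_eq (le_trans hk
    (le_of_eq (Finset.card_univ (α := V)).symm) : k ≤ (Finset.univ : Finset V).card)
  refine csSup_le ⟨∑ i ∈ T, f i, T, hT, rfl⟩ ?_
  rintro x ⟨T', hT', rfl⟩
  exact h T' hT'

end Defs

set_option linter.unusedSectionVars false

section Select

/-- Choose a `k`-set maximizing the sum of `f`; any `[0,1]`-weighting of total mass `k`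
has `f`-weighted sum at most the max. -/
lemma weighted_le_max_subset (f c : V → ℝ) (k : ℕ) (hk1 : 1 ≤ k) (hk2 : k ≤ Fintype.card V)
    (hc0 : ∀ u, 0 ≤ c u) (hc1 : ∀ u, c u ≤ 1) (hcs : ∑ u, c u = (k : ℝ)) :
    ∃ S : Finset V, S.card = k ∧ ∑ u, f u * c u ≤ ∑ u ∈ S, f u := by
  have hne : (Finset.univ.powersetCard k : Finset (Finset V)).Nonempty := by
    rw [Finset.powersetCard_nonempty]
    simpa using hk2
  obtain ⟨S, hS, hmax⟩ := Finset.exists_max_image (Finset.univ.powersetCard k)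
    (fun S => ∑ u ∈ S, f u) hne
  rw [Finset.mem_powersetCard] at hS
  obtain ⟨-, hScard⟩ := hS
  have hSne : S.Nonempty := Finset.card_pos.mp (hScard ▸ hk1)
  obtain ⟨v₀, hv₀S, hv₀min⟩ := Finset.exists_min_image S f hSne
  set θ := f v₀ with hθ
  have hout : ∀ u, u ∉ S → f u ≤ θ := by
    intro u hu
    by_contra hgt
    push_neg at hgt
    set S' := insert u (S.erase v₀) with hS'
    have hS'card : S'.card = k := by
      rw [hS', Finset.card_insert_of_notMem (fun hmem => hu (Finset.mem_of_mem_erase hmem)),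
        Finset.card_erase_of_mem hv₀S, hScard]
      omega
    have hsum' : ∑ x ∈ S', f x = ∑ x ∈ S, f x - θ + f u := by
      rw [hS', Finset.sum_insert (fun hmem => hu (Finset.mem_of_mem_erase hmem)),
        Finset.sum_erase_eq_sub hv₀S, hθ]
      ring
    have hle := hmax S' (Finset.mem_powersetCard.mpr ⟨Finset.subset_univ _, hS'card⟩)
    rw [hsum'] at hle
    linarith
  refine ⟨S, hScard, ?_⟩
  have split : ∑ u, f u * c u = ∑ u ∈ S, f u * c u + ∑ u ∈ Sᶜ, f u * c u :=
    (Finset.sum_add_sum_compl S _).symm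
  have hb1 : ∑ u ∈ S, f u * c u ≤ (∑ u ∈ S, (f u - θ)) + θ * ∑ u ∈ S, c u := by
    rw [Finset.mul_sum, ← Finset.sum_add_distrib]
    refine Finset.sum_le_sum fun u hu => ?_
    have h1 : 0 ≤ f u - θ := sub_nonneg.mpr (hv₀min u hu)
    nlinarith [hc1 u, hc0 u]
  have hb2 : ∑ u ∈ Sᶜ, f u * c u ≤ θ * ∑ u ∈ Sᶜ, c u := by
    rw [Finset.mul_sum]
    refine Finset.sum_le_sum fun u hu => ?_
    have := hout u (by simpa using hu)
    nlinarith [hc0 u]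
  have hcsplit : ∑ u ∈ S, c u + ∑ u ∈ Sᶜ, c u = (k : ℝ) := by
    rw [Finset.sum_add_sum_compl S c]; exact hcs
  have : ∑ u ∈ S, (f u - θ) = (∑ u ∈ S, f u) - k * θ := by
    rw [Finset.sum_sub_distrib, Finset.sum_const, hScard, nsmul_eq_mul]
  have hmul : θ * ∑ u ∈ S, c u + θ * ∑ u ∈ Sᶜ, c u = k * θ := by
    rw [← mul_add, hcsplit]; ring
  linarith

end Select

lemma numEdges_eq {W : Type*} [Fintype W] (G : SimpleGraph W) [Fintype G.edgeSet] :
    numEdges G = G.edgeFinset.card := by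
  unfold numEdges
  convert rfl

lemma eig_as_quad {M : Matrix V V ℝ} (hM : M.IsHermitian) (i : V) :
    hM.eigenvalues i = ∑ u, evec hM i u * (M *ᵥ evec hM i) u := by
  have h : ∀ u, evec hM i u * (M *ᵥ evec hM i) u
      = hM.eigenvalues i * (evec hM i u * evec hM i u) := by
    intro u; rw [evec_mul hM i u]; ring
  simp_rw [h]
  rw [← Finset.mul_sum, evec_ortho hM i i, if_pos rfl, mul_one]

/-- trace of the square of the adjacency matrix -/
lemma adj_eig_sq (G : SimpleGraph V) [DecidableRel G.Adj] :
    ∑ i, (adjMatrix_isHermitian G).eigenvalues i ^ 2 = 2 * (numEdges G : ℝ) := by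
  rw [← trace_sq (adjMatrix_isHermitian G)]
  have h1 : ∀ u v : V, (G.adjMatrix ℝ u v) ^ 2 = G.adjMatrix ℝ u v := by
    intro u v
    by_cases h : G.Adj u v <;> simp [h]
  simp_rw [h1]
  have h2 : ∀ u : V, ∑ v, G.adjMatrix ℝ u v = (G.degree u : ℝ) := by
    intro u
    rw [G.degree_eq_sum_if_adj u]
    simp [SimpleGraph.adjMatrix_apply]
  simp_rw [h2]
  rw [numEdges_eq]
  have := G.sum_degrees_eq_twice_card_edges
  exact_mod_cast congrArg (fun x : ℕ => (x : ℝ)) this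

/-- the key combinatorial estimate : `∑_{u ∈ S} deg u ≤ m + e(G[S])` -/
lemma sum_degree_le (G : SimpleGraph V) [DecidableRel G.Adj] (S : Finset V) :
    ∑ u ∈ S, G.degree u ≤ numEdges G + numEdges (G.induce (↑S : Set V)) := by
  classical
  have hhs : ∑ v, G.degree v = 2 * numEdges G := by
    rw [numEdges_eq]; exact G.sum_degrees_eq_twice_card_edges
  have hsplit : ∑ u ∈ S, G.degree u + ∑ u ∈ Sᶜ, G.degree u = ∑ v, G.degree v :=
    Finset.sum_add_sum_compl S _
  set P : Sym2 V → Prop := fun e => ∀ v ∈ e, v ∈ S with hP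
  have hcard : numEdges G ≤ (G.edgeFinset.filter P).card
      + (G.edgeFinset.filter (fun e => ¬ P e)).card := by
    classical
    calc numEdges G = G.edgeFinset.card := numEdges_eq G
      _ = (G.edgeFinset.filter P ∪ G.edgeFinset.filter (fun e => ¬ P e)).card := by
          rw [Finset.filter_union_filter_not_eq P G.edgeFinset]
      _ ≤ _ := Finset.card_union_le _ _
  have hFin : (G.edgeFinset.filter P).card = numEdges (G.induce (↑S : Set V)) := by
    rw [numEdges_eq]
    symm
    have hinj : Function.Injective (Sym2.map (Subtype.val : ↥(↑S : Set V) → V)) :=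
      Sym2.map.injective Subtype.val_injective
    apply Finset.card_bij (fun e _ => Sym2.map Subtype.val e)
    · intro e he
      induction e using Sym2.ind with
      | _ a b =>
        rw [SimpleGraph.mem_edgeFinset, SimpleGraph.mem_edgeSet] at he
        rw [Finset.mem_filter]
        refine ⟨?_, ?_⟩
        · rw [Sym2.map_pair_eq, SimpleGraph.mem_edgeFinset, SimpleGraph.mem_edgeSet]
          exact he
        · intro v hv
          rw [Sym2.map_pair_eq, Sym2.mem_iff] at hv
          rcases hv with rfl | rfl
          · exact Finset.mem_coe.mp a.2
          · exact Finset.mem_coe.mp b.2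
    · intro e1 h1 e2 h2 he
      exact hinj he
    · intro e he
      rw [Finset.mem_filter, SimpleGraph.mem_edgeFinset] at he
      obtain ⟨hadj, hmem⟩ := he
      revert hadj hmem
      induction e using Sym2.ind with
      | _ x y =>
        intro hadj hmem
        rw [SimpleGraph.mem_edgeSet] at hadj
        have hx : x ∈ (↑S : Set V) := Finset.mem_coe.mpr (hmem x (Sym2.mem_mk_left x y))
        have hy : y ∈ (↑S : Set V) := Finset.mem_coe.mpr (hmem y (Sym2.mem_mk_right x y))
        refine ⟨s(⟨x, hx⟩, ⟨y, hy⟩), ?_, ?_⟩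
        · rw [SimpleGraph.mem_edgeFinset, SimpleGraph.mem_edgeSet]
          exact hadj
        · rw [Sym2.map_pair_eq]
  have hFout : (G.edgeFinset.filter (fun e => ¬ P e)).card ≤ ∑ u ∈ Sᶜ, G.degree u := by
    have hsub : G.edgeFinset.filter (fun e => ¬ P e)
        ⊆ Sᶜ.biUnion (fun u => G.incidenceFinset u) := by
      intro e he
      rw [Finset.mem_filter] at he
      obtain ⟨heE, hne⟩ := he
      rw [hP] at hne
      simp only [not_forall, Classical.not_imp] at hne
      obtain ⟨v, hv, hvS⟩ := hne
      rw [Finset.mem_biUnion]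
      refine ⟨v, Finset.mem_compl.mpr hvS, ?_⟩
      rw [SimpleGraph.mem_incidenceFinset]
      exact ⟨SimpleGraph.mem_edgeFinset.mp heE, hv⟩
    calc (G.edgeFinset.filter (fun e => ¬ P e)).card
        ≤ (Sᶜ.biUnion (fun u => G.incidenceFinset u)).card := Finset.card_le_card hsub
      _ ≤ ∑ u ∈ Sᶜ, (G.incidenceFinset u).card := Finset.card_biUnion_le
      _ = ∑ u ∈ Sᶜ, G.degree u :=
          Finset.sum_congr rfl fun u _ => G.card_incidenceFinset_eq_degree u
  omega

lemma sum_sum_adjMatrix {W : Type*} [Fintype W] [DecidableEq W] (H : SimpleGraph W)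
    [DecidableRel H.Adj] : ∑ u, ∑ v, H.adjMatrix ℝ u v = 2 * (numEdges H : ℝ) := by
  have h2 : ∀ u : W, ∑ v, H.adjMatrix ℝ u v = (H.degree u : ℝ) := by
    intro u
    rw [H.degree_eq_sum_if_adj u]
    simp [SimpleGraph.adjMatrix_apply]
  simp_rw [h2]
  rw [numEdges_eq]
  exact_mod_cast congrArg (fun x : ℕ => (x : ℝ)) H.sum_degrees_eq_twice_card_edges

lemma eig_le_specRad {W : Type*} [Fintype W] [DecidableEq W] (H : SimpleGraph W) (j : W) :
    adjEig H j ≤ specRad H := by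
  have h := le_sumKLargest (adjEig H) (Finset.card_singleton j)
  rwa [Finset.sum_singleton] at h

/-- 2·e(H) ≤ ρ(H)·|W| for any graph -/
lemma two_numEdges_le_specRad_mul {W : Type*} [Fintype W] [DecidableEq W]
    (H : SimpleGraph W) : (2 * numEdges H : ℝ) ≤ specRad H * Fintype.card W := by
  classical
  set hA := adjMatrix_isHermitian H with hhA
  have h2 := quad_form hA (fun _ => (1 : ℝ))
  have h1 : (fun _ : W => (1 : ℝ)) ⬝ᵥ (H.adjMatrix ℝ *ᵥ fun _ => (1 : ℝ))
      = 2 * (numEdges H : ℝ) := by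
    simp only [dotProduct, Matrix.mulVec, dotProduct, one_mul, mul_one]
    exact sum_sum_adjMatrix H
  have heach : ∀ j, hA.eigenvalues j ≤ specRad H := fun j => eig_le_specRad H j
  have hsum : ∑ j, (∑ u, evec hA j u * (1 : ℝ)) ^ 2 = (Fintype.card W : ℝ) := by
    have := parseval hA (fun _ => (1 : ℝ))
    simpa using this
  rw [← h1, h2]
  calc ∑ j, hA.eigenvalues j * (∑ u, evec hA j u * (1 : ℝ)) ^ 2
      ≤ ∑ j, specRad H * (∑ u, evec hA j u * (1 : ℝ)) ^ 2 :=
        Finset.sum_le_sum fun j _ => mul_le_mul_of_nonneg_right (heach j) (sq_nonneg _)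
    _ = specRad H * Fintype.card W := by rw [← Finset.mul_sum, hsum]

lemma specRad_le_sqrt {W : Type*} [Fintype W] [DecidableEq W] (H : SimpleGraph W) :
    specRad H ≤ Real.sqrt (2 * numEdges H) := by
  classical
  refine Real.sSup_le ?_ (Real.sqrt_nonneg _)
  rintro x ⟨T, hT, rfl⟩
  rw [Finset.card_eq_one] at hT
  obtain ⟨j, rfl⟩ := hT
  rw [Finset.sum_singleton]
  have h1 : adjEig H j ^ 2 ≤ 2 * (numEdges H : ℝ) := by
    rw [← adj_eig_sq H]
    exact Finset.single_le_sum (f := fun i => (adjMatrix_isHermitian H).eigenvalues i ^ 2)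
      (fun i _ => sq_nonneg _) (Finset.mem_univ j)
  calc adjEig H j ≤ |adjEig H j| := le_abs_self _
    _ = Real.sqrt (adjEig H j ^ 2) := (Real.sqrt_sq_eq_abs _).symm
    _ ≤ Real.sqrt (2 * numEdges H) := Real.sqrt_le_sqrt h1

lemma density_le_maxDensity (G : SimpleGraph V) (S : Finset V) (hS : S.Nonempty) :
    specRad (G.induce (↑S : Set V)) / (S.card : ℝ) ≤ maxDensity G := by
  apply le_csSup
  · apply Set.Finite.bddAbove
    apply Set.Finite.subset
      (Set.finite_range (fun S : Finset V => specRad (G.induce (↑S : Set V)) / (S.card : ℝ)))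
    rintro x ⟨S', -, rfl⟩
    exact ⟨S', rfl⟩
  · exact ⟨S, hS, rfl⟩

lemma card_coe_finset (S : Finset V) : Fintype.card ↥(↑S : Set V) = S.card := by
  rw [← Fintype.card_coe S]
  exact Fintype.card_congr (Equiv.subtypeEquivRight (by simp))

lemma nat_choose_two (n : ℕ) : n.choose 2 * 2 = n * (n - 1) := by
  cases n with
  | zero => simp
  | succ m =>
    rw [Nat.choose_two_right, Nat.succ_sub_one]
    exact Nat.div_mul_cancel (by simpa [mul_comm] using (Nat.even_mul_succ_self m).two_dvd)

lemma numEdges_induce_le (G : SimpleGraph V) (S : Finset V) :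
    (numEdges (G.induce (↑S : Set V)) : ℝ) * 2 ≤ (S.card : ℝ) * ((S.card : ℝ) - 1) := by
  classical
  have h1 : numEdges (G.induce (↑S : Set V)) ≤ (Fintype.card ↥(↑S : Set V)).choose 2 := by
    rw [numEdges_eq]
    exact SimpleGraph.card_edgeFinset_le_card_choose_two
  rw [card_coe_finset] at h1
  have h2 : numEdges (G.induce (↑S : Set V)) * 2 ≤ S.card * (S.card - 1) := by
    calc numEdges (G.induce (↑S : Set V)) * 2 ≤ S.card.choose 2 * 2 := by omega
      _ = S.card * (S.card - 1) := nat_choose_two S.card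
  have h3 : ((S.card * (S.card - 1) : ℕ) : ℝ) ≤ (S.card : ℝ) * ((S.card : ℝ) - 1) := by
    rcases Nat.eq_zero_or_pos S.card with h | h
    · simp [h]
    · rw [Nat.cast_mul, Nat.cast_sub h]
      simp
  calc (numEdges (G.induce (↑S : Set V)) : ℝ) * 2
      = ((numEdges (G.induce (↑S : Set V)) * 2 : ℕ) : ℝ) := by push_cast; ring
    _ ≤ ((S.card * (S.card - 1) : ℕ) : ℝ) := by exact_mod_cast h2
    _ ≤ (S.card : ℝ) * ((S.card : ℝ) - 1) := h3

lemma maxDensity_le (G : SimpleGraph V) [Nonempty V] :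
    maxDensity G ≤ 1 - 1 / (2 * Fintype.card V) := by
  classical
  have hn : (1 : ℝ) ≤ Fintype.card V := by exact_mod_cast Fintype.card_pos
  apply csSup_le
  · obtain ⟨v⟩ := (inferInstance : Nonempty V)
    exact ⟨_, ⟨{v}, Finset.singleton_nonempty v, rfl⟩⟩
  · rintro x ⟨S, hS, rfl⟩
    set s : ℝ := (S.card : ℝ) with hs
    have hs1 : (1 : ℝ) ≤ s := by
      rw [hs]; exact_mod_cast Finset.card_pos.mpr hS
    have hsn : s ≤ Fintype.card V := by
      rw [hs]
      exact_mod_cast le_trans (Finset.card_le_univ S) (le_of_eq (Finset.card_univ))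
    have hE := numEdges_induce_le G S
    have hρ := specRad_le_sqrt (G.induce (↑S : Set V))
    have hsqrt : Real.sqrt (2 * numEdges (G.induce (↑S : Set V))) ≤ s - 1/2 := by
      have h1 : 2 * (numEdges (G.induce (↑S : Set V)) : ℝ) ≤ (s - 1/2) ^ 2 := by nlinarith
      calc Real.sqrt (2 * numEdges (G.induce (↑S : Set V)))
          ≤ Real.sqrt ((s - 1/2) ^ 2) := Real.sqrt_le_sqrt h1
        _ = s - 1/2 := Real.sqrt_sq (by linarith)
    have hdiv : specRad (G.induce (↑S : Set V)) / s ≤ (s - 1/2) / s :=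
      (div_le_div_iff_of_pos_right (by linarith : (0:ℝ) < s)).mpr (le_trans hρ hsqrt)
    calc specRad (G.induce (↑S : Set V)) / s ≤ (s - 1/2) / s := hdiv
      _ = 1 - 1 / (2 * s) := by field_simp
      _ ≤ 1 - 1 / (2 * Fintype.card V) := by
        have h1 : 1 / (2 * (Fintype.card V : ℝ)) ≤ 1 / (2 * s) :=
          one_div_le_one_div_of_le (by linarith) (by linarith)
        linarith

/-- The master spectral bound: `s_k(G) ≤ m + t·k²/2 + √(2mk)`. -/
lemma master (G : SimpleGraph V) (k : ℕ) (hk1 : 1 ≤ k) (hk2 : k ≤ Fintype.card V) :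
    sLap G k ≤ numEdges G + maxDensity G * k ^ 2 / 2
      + Real.sqrt (2 * numEdges G * k) := by
  classical
  set hL := lapMatrix_isHermitian G with hhL
  set hA := adjMatrix_isHermitian G with hhA
  have hlap : lapEig G = hL.eigenvalues := rfl
  have hk0 : (0 : ℝ) < k := by exact_mod_cast hk1
  show sumKLargest (lapEig G) k ≤ _
  apply sumKLargest_le _ hk2
  intro T hT
  rw [hlap]
  -- the weight function
  set c : V → ℝ := fun u => ∑ i ∈ T, evec hL i u ^ 2 with hc
  have hc0 : ∀ u, 0 ≤ c u := fun u => Finset.sum_nonneg fun i _ => sq_nonneg _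
  have hone : ∀ u, ∑ i, evec hL i u ^ 2 = 1 := by
    intro u
    have h := evec_dual hL u u
    rw [if_pos rfl] at h
    rw [← h]
    exact Finset.sum_congr rfl fun i _ => sq _
  have honeA : ∀ j, ∑ u, evec hA j u ^ 2 = 1 := by
    intro j
    have h := evec_ortho hA j j
    rw [if_pos rfl] at h
    rw [← h]
    exact Finset.sum_congr rfl fun u _ => sq _
  have hrow : ∀ i, ∑ u, evec hL i u ^ 2 = 1 := by
    intro i
    have h := evec_ortho hL i i
    rw [if_pos rfl] at h
    rw [← h]
    exact Finset.sum_congr rfl fun u _ => sq _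
  have hc1 : ∀ u, c u ≤ 1 := by
    intro u
    have h1 : c u ≤ ∑ i, evec hL i u ^ 2 :=
      Finset.sum_le_sum_of_subset_of_nonneg (Finset.subset_univ T) fun i _ _ => sq_nonneg _
    rw [hone u] at h1
    exact h1
  have hcs : ∑ u, c u = (k : ℝ) := by
    rw [hc, Finset.sum_comm, Finset.sum_congr rfl fun i _ => hrow i, Finset.sum_const, hT,
      nsmul_eq_mul, mul_one]
  -- decompose each eigenvalue
  have hsum_eq : ∑ i ∈ T, hL.eigenvalues i
      = (∑ i ∈ T, evec hL i ⬝ᵥ (G.degMatrix ℝ *ᵥ evec hL i))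
        - ∑ i ∈ T, evec hL i ⬝ᵥ (G.adjMatrix ℝ *ᵥ evec hL i) := by
    rw [← Finset.sum_sub_distrib]
    refine Finset.sum_congr rfl fun i _ => ?_
    have heig : hL.eigenvalues i = evec hL i ⬝ᵥ (G.lapMatrix ℝ *ᵥ evec hL i) := eig_as_quad hL i
    have hlm : G.lapMatrix ℝ *ᵥ evec hL i
        = G.degMatrix ℝ *ᵥ evec hL i - G.adjMatrix ℝ *ᵥ evec hL i := by
      exact Matrix.sub_mulVec _ _ _
    rw [heig, hlm, dotProduct_sub]
  -- degree part
  have hDeg : ∑ i ∈ T, evec hL i ⬝ᵥ (G.degMatrix ℝ *ᵥ evec hL i)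
      ≤ numEdges G + maxDensity G * k ^ 2 / 2 := by
    have h1 : ∀ i, evec hL i ⬝ᵥ (G.degMatrix ℝ *ᵥ evec hL i)
        = ∑ u, (G.degree u : ℝ) * evec hL i u ^ 2 := by
      intro i
      rw [dotProduct]
      refine Finset.sum_congr rfl fun u _ => ?_
      rw [SimpleGraph.degMatrix_mulVec_apply]
      ring
    have h2 : ∑ i ∈ T, evec hL i ⬝ᵥ (G.degMatrix ℝ *ᵥ evec hL i)
        = ∑ u, (G.degree u : ℝ) * c u := by
      rw [Finset.sum_congr rfl fun i _ => h1 i, Finset.sum_comm]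
      refine Finset.sum_congr rfl fun u _ => ?_
      rw [hc, ← Finset.mul_sum]
    obtain ⟨S, hScard, hSle⟩ :=
      weighted_le_max_subset (fun u => (G.degree u : ℝ)) c k hk1 hk2 hc0 hc1 hcs
    have hSne : S.Nonempty := Finset.card_pos.mp (hScard ▸ hk1)
    have h3 : ∑ u ∈ S, (G.degree u : ℝ) ≤ numEdges G + numEdges (G.induce (↑S : Set V)) := by
      have := sum_degree_le G S
      have hcast : ((∑ u ∈ S, G.degree u : ℕ) : ℝ)
          ≤ ((numEdges G + numEdges (G.induce (↑S : Set V)) : ℕ) : ℝ) := by exact_mod_cast this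
      push_cast at hcast
      exact hcast
    have h4 : (numEdges (G.induce (↑S : Set V)) : ℝ) ≤ maxDensity G * k ^ 2 / 2 := by
      have hd := density_le_maxDensity G S hSne
      have hcard : (Fintype.card ↥(↑S : Set V) : ℝ) = (k : ℝ) := by
        rw [card_coe_finset, hScard]
      have hkS : (S.card : ℝ) = (k : ℝ) := by exact_mod_cast hScard
      have hρ : specRad (G.induce (↑S : Set V)) ≤ maxDensity G * k := by
        rw [hkS] at hd
        calc specRad (G.induce (↑S : Set V))
            = specRad (G.induce (↑S : Set V)) / k * k := by field_simp
          _ ≤ maxDensity G * k := by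
              apply mul_le_mul_of_nonneg_right hd (le_of_lt hk0)
      have h2e := two_numEdges_le_specRad_mul (G.induce (↑S : Set V))
      rw [hcard] at h2e
      nlinarith [hk0]
    rw [h2]
    calc ∑ u, (G.degree u : ℝ) * c u ≤ ∑ u ∈ S, (G.degree u : ℝ) := hSle
      _ ≤ numEdges G + numEdges (G.induce (↑S : Set V)) := h3
      _ ≤ numEdges G + maxDensity G * k ^ 2 / 2 := by linarith
  -- adjacency part
  have hAdj : - ∑ i ∈ T, evec hL i ⬝ᵥ (G.adjMatrix ℝ *ᵥ evec hL i)
      ≤ Real.sqrt (2 * numEdges G * k) := by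
    set b : V → ℝ := fun j => ∑ i ∈ T, (∑ u, evec hA j u * evec hL i u) ^ 2 with hb
    have hquad : ∀ i, evec hL i ⬝ᵥ (G.adjMatrix ℝ *ᵥ evec hL i)
        = ∑ j, hA.eigenvalues j * (∑ u, evec hA j u * evec hL i u) ^ 2 :=
      fun i => quad_form hA (evec hL i)
    have hswap : ∑ i ∈ T, evec hL i ⬝ᵥ (G.adjMatrix ℝ *ᵥ evec hL i)
        = ∑ j, hA.eigenvalues j * b j := by
      rw [Finset.sum_congr rfl fun i _ => hquad i, Finset.sum_comm]
      refine Finset.sum_congr rfl fun j _ => ?_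
      rw [hb, ← Finset.mul_sum]
    have hb0 : ∀ j, 0 ≤ b j := fun j => Finset.sum_nonneg fun i _ => sq_nonneg _
    have hb1 : ∀ j, b j ≤ 1 := by
      intro j
      have h1 : b j ≤ ∑ i, (∑ u, evec hA j u * evec hL i u) ^ 2 :=
        Finset.sum_le_sum_of_subset_of_nonneg (Finset.subset_univ T) fun i _ _ => sq_nonneg _
      have h2 : ∑ i, (∑ u, evec hA j u * evec hL i u) ^ 2 = 1 := by
        have hp := parseval hL (evec hA j)
        have h3 : ∀ i : V, (∑ u, evec hA j u * evec hL i u)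
            = ∑ u, evec hL i u * evec hA j u :=
          fun i => Finset.sum_congr rfl fun u _ => mul_comm _ _
        rw [Finset.sum_congr rfl fun i _ => by rw [h3 i], hp]
        exact honeA j
      linarith
    have hbsum : ∑ j, b j = (k : ℝ) := by
      rw [hb, Finset.sum_comm]
      have h1 : ∀ i, ∑ j, (∑ u, evec hA j u * evec hL i u) ^ 2 = 1 := by
        intro i
        rw [parseval hA (evec hL i)]
        exact hrow i
      rw [Finset.sum_congr rfl fun i _ => h1 i, Finset.sum_const, hT, nsmul_eq_mul, mul_one]
    rw [hswap]
    have hCS : (∑ j, (- hA.eigenvalues j) * b j) ^ 2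
        ≤ (∑ j, (- hA.eigenvalues j) ^ 2) * ∑ j, b j ^ 2 :=
      Finset.sum_mul_sq_le_sq_mul_sq Finset.univ _ _
    have hmu : ∑ j, (- hA.eigenvalues j) ^ 2 = 2 * (numEdges G : ℝ) := by
      rw [Finset.sum_congr rfl fun j _ => neg_pow ..]
      simp only [neg_one_sq]
      rw [← adj_eig_sq G]
      exact Finset.sum_congr rfl fun j _ => by ring
    have hbsq : ∑ j, b j ^ 2 ≤ (k : ℝ) := by
      rw [← hbsum]
      refine Finset.sum_le_sum fun j _ => ?_
      nlinarith [hb0 j, hb1 j]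
    have hXle : (∑ j, (- hA.eigenvalues j) * b j) ^ 2 ≤ 2 * (numEdges G : ℝ) * k := by
      calc (∑ j, (- hA.eigenvalues j) * b j) ^ 2
          ≤ (∑ j, (- hA.eigenvalues j) ^ 2) * ∑ j, b j ^ 2 := hCS
        _ ≤ 2 * (numEdges G : ℝ) * k := by
            rw [hmu]
            have h2m : (0 : ℝ) ≤ 2 * (numEdges G : ℝ) := by positivity
            nlinarith [hbsq]
    have hneg : - ∑ j, hA.eigenvalues j * b j = ∑ j, (- hA.eigenvalues j) * b j := by
      rw [← Finset.sum_neg_distrib]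
      exact Finset.sum_congr rfl fun j _ => by ring
    rw [hneg]
    calc ∑ j, (- hA.eigenvalues j) * b j ≤ |∑ j, (- hA.eigenvalues j) * b j| := le_abs_self _
      _ = Real.sqrt ((∑ j, (- hA.eigenvalues j) * b j) ^ 2) := (Real.sqrt_sq_eq_abs _).symm
      _ ≤ Real.sqrt (2 * numEdges G * k) := Real.sqrt_le_sqrt hXle
  rw [hsum_eq]
  linarith

lemma lapEig_le_card (G : SimpleGraph V) (i : V) :
    lapEig G i ≤ Fintype.card V := by
  classical
  set hL := lapMatrix_isHermitian G with hhL
  have hlap : lapEig G = hL.eigenvalues := rfl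
  set x : V → ℝ := evec hL i with hx
  have hnorm : x ⬝ᵥ x = 1 := by
    have := evec_ortho hL i i; rwa [if_pos rfl] at this
  have hid : ((Fintype.card V : ℝ) • (1 : Matrix V V ℝ)) - G.lapMatrix ℝ
      = Gᶜ.lapMatrix ℝ + Matrix.of (fun _ _ => (1 : ℝ)) := by
    ext u v
    simp only [Matrix.sub_apply, Matrix.smul_apply, Matrix.one_apply, Matrix.add_apply,
      Matrix.of_apply, SimpleGraph.lapMatrix, SimpleGraph.degMatrix, Matrix.sub_apply,
      Matrix.diagonal_apply, SimpleGraph.adjMatrix_apply, smul_eq_mul]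
    by_cases huv : u = v
    · subst huv
      have hdeg : Gᶜ.degree u = Fintype.card V - 1 - G.degree u :=
        SimpleGraph.degree_compl G u
      have hlt : G.degree u < Fintype.card V := G.degree_lt_card_verts u
      simp only [if_pos rfl, SimpleGraph.irrefl, if_false, hdeg]
      rw [Nat.cast_sub (by omega), Nat.cast_sub (by omega)]
      push_cast
      ring
    · have h1 : ¬ (u = v) := huv
      by_cases hadj : G.Adj u v
      · have h2 : ¬ Gᶜ.Adj u v := by simp [SimpleGraph.compl_adj, hadj]
        simp [h1, hadj, h2]
      · have h2 : Gᶜ.Adj u v := by simp [SimpleGraph.compl_adj, h1, hadj]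
        simp [h1, hadj, h2]
  have hpsd : (0 : ℝ) ≤ x ⬝ᵥ (Gᶜ.lapMatrix ℝ *ᵥ x) := by
    have := (SimpleGraph.posSemidef_lapMatrix ℝ Gᶜ).dotProduct_mulVec_nonneg x
    rwa [star_trivial] at this
  have hJ : x ⬝ᵥ ((Matrix.of (fun _ _ => (1 : ℝ)) : Matrix V V ℝ) *ᵥ x) = (∑ u, x u) ^ 2 := by
    have h1 : ∀ u, ((Matrix.of (fun _ _ => (1 : ℝ)) : Matrix V V ℝ) *ᵥ x) u = ∑ v, x v := by
      intro u
      simp [Matrix.mulVec, dotProduct]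
    rw [dotProduct]
    simp_rw [h1]
    rw [← Finset.sum_mul, sq]
  have heig : hL.eigenvalues i = x ⬝ᵥ (G.lapMatrix ℝ *ᵥ x) := eig_as_quad hL i
  have hexp : x ⬝ᵥ ((((Fintype.card V : ℝ) • (1 : Matrix V V ℝ)) - G.lapMatrix ℝ) *ᵥ x)
      = (Fintype.card V : ℝ) * (x ⬝ᵥ x) - x ⬝ᵥ (G.lapMatrix ℝ *ᵥ x) := by
    rw [Matrix.sub_mulVec, dotProduct_sub]
    congr 1
    rw [Matrix.smul_mulVec, Matrix.one_mulVec, dotProduct_smul, smul_eq_mul]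
  have hexp2 : x ⬝ᵥ (((Gᶜ.lapMatrix ℝ) + Matrix.of (fun _ _ => (1 : ℝ))) *ᵥ x)
      = x ⬝ᵥ (Gᶜ.lapMatrix ℝ *ᵥ x) + x ⬝ᵥ (Matrix.of (fun _ _ => (1 : ℝ)) *ᵥ x) := by
    rw [Matrix.add_mulVec, dotProduct_add]
  have hfinal : (0 : ℝ) ≤ (Fintype.card V : ℝ) * (x ⬝ᵥ x) - x ⬝ᵥ (G.lapMatrix ℝ *ᵥ x) := by
    rw [← hexp, hid, hexp2, hJ]
    have := sq_nonneg (∑ u, x u)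
    linarith
  rw [hlap, heig]
  rw [hnorm] at hfinal
  linarith

lemma sLap_le_card_mul (G : SimpleGraph V) (k : ℕ) (hk2 : k ≤ Fintype.card V) :
    sLap G k ≤ k * Fintype.card V := by
  apply sumKLargest_le _ hk2
  intro T hT
  calc ∑ i ∈ T, lapEig G i ≤ ∑ i ∈ T, (Fintype.card V : ℝ) :=
        Finset.sum_le_sum fun i _ => lapEig_le_card G i
    _ = k * Fintype.card V := by rw [Finset.sum_const, hT, nsmul_eq_mul]

end Aux

/-- `BC_k(G)` holds if `k ≥ 2 m^{1/3}/(1-t)^{2/3}` or `m ≥ (2n)^{3/2}/(1-t)`,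
where `t = t(G)` is the maximum subgraph spectral density. -/
theorem bc_of_maxDensity {V : Type*} [Fintype V] [DecidableEq V] (G : SimpleGraph V)
    (k : ℕ) (hk1 : 1 ≤ k) (hk2 : k ≤ Fintype.card V)
    (h : 2 * (numEdges G : ℝ) ^ ((1 : ℝ) / 3) / (1 - maxDensity G) ^ ((2 : ℝ) / 3) ≤ (k : ℝ)
      ∨ (2 * (Fintype.card V : ℝ)) ^ ((3 : ℝ) / 2) / (1 - maxDensity G) ≤ (numEdges G : ℝ)) :
    BC G k := by
  classical
  have hVne : Nonempty V := Fintype.card_pos_iff.mp (lt_of_lt_of_le hk1 hk2)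
  set n : ℕ := Fintype.card V with hn
  set m : ℝ := (numEdges G : ℝ) with hm
  set t : ℝ := maxDensity G with ht
  have hn1 : (1 : ℝ) ≤ (n : ℝ) := by exact_mod_cast le_trans hk1 hk2
  have hm0 : 0 ≤ m := Nat.cast_nonneg _
  have hk0 : (0 : ℝ) < k := by exact_mod_cast hk1
  have htau : 1 / (2 * (n : ℝ)) ≤ 1 - t := by
    have := maxDensity_le G
    rw [← ht, ← hn] at this
    linarith
  have htau0 : (0 : ℝ) < 1 - t := lt_of_lt_of_le (by positivity) htau
  have hchoose : ((k + 1).choose 2 : ℝ) = k * (k + 1) / 2 := by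
    have h2 : (k + 1).choose 2 * 2 = (k + 1) * k := by
      rw [Nat.choose_two_right]
      exact Nat.div_mul_cancel ((by simpa [mul_comm] using Nat.even_mul_succ_self k : Even ((k+1)*k)).two_dvd)
    have : ((k + 1).choose 2 * 2 : ℝ) = (k + 1) * k := by exact_mod_cast h2
    push_cast at this ⊢
    linarith
  -- the key branch-1 argument
  have branch1 : 2 * m ^ ((1 : ℝ) / 3) / (1 - t) ^ ((2 : ℝ) / 3) ≤ (k : ℝ) → BC G k := by
    intro hyp
    have hpow : (0 : ℝ) < (1 - t) ^ ((2 : ℝ) / 3) := Real.rpow_pos_of_pos htau0 _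
    rw [div_le_iff₀ hpow] at hyp
    -- cube both sides
    have hcube : 8 * m ≤ k ^ 3 * (1 - t) ^ 2 := by
      have h1 : (2 * m ^ ((1 : ℝ) / 3)) ^ 3 ≤ ((k : ℝ) * (1 - t) ^ ((2 : ℝ) / 3)) ^ 3 := by
        apply pow_le_pow_left₀ (by positivity) hyp
      have h2 : (m ^ ((1 : ℝ) / 3)) ^ 3 = m := by
        rw [← Real.rpow_natCast (m ^ ((1:ℝ)/3)) 3, ← Real.rpow_mul hm0]
        norm_num
      have h3 : ((1 - t) ^ ((2 : ℝ) / 3)) ^ 3 = (1 - t) ^ 2 := by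
        rw [← Real.rpow_natCast ((1 - t) ^ ((2:ℝ)/3)) 3, ← Real.rpow_mul (le_of_lt htau0),
          show (2:ℝ)/3 * ((3:ℕ):ℝ) = ((2:ℕ):ℝ) by push_cast; ring, Real.rpow_natCast]
      calc 8 * m = (2 * m ^ ((1 : ℝ) / 3)) ^ 3 := by rw [mul_pow, h2]; norm_num
        _ ≤ ((k : ℝ) * (1 - t) ^ ((2 : ℝ) / 3)) ^ 3 := h1
        _ = k ^ 3 * (1 - t) ^ 2 := by rw [mul_pow, h3]
    have hsqrt : Real.sqrt (2 * m * k) ≤ (1 - t) * k ^ 2 / 2 := by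
      have h1 : 2 * m * k ≤ ((1 - t) * k ^ 2 / 2) ^ 2 := by nlinarith [sq_nonneg ((1-t) * k)]
      calc Real.sqrt (2 * m * k) ≤ Real.sqrt (((1 - t) * k ^ 2 / 2) ^ 2) :=
            Real.sqrt_le_sqrt h1
        _ = (1 - t) * k ^ 2 / 2 := Real.sqrt_sq (by positivity)
    have hmaster := master G k hk1 hk2
    rw [BC]
    rw [← hm, ← ht] at *
    rw [hchoose]
    calc sLap G k ≤ m + t * k ^ 2 / 2 + Real.sqrt (2 * m * k) := hmaster
      _ ≤ m + t * k ^ 2 / 2 + (1 - t) * k ^ 2 / 2 := by linarith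
      _ ≤ m + k * (k + 1) / 2 := by nlinarith [hk0]
  rcases h with hyp | hyp
  · exact branch1 hyp
  · by_cases hcase : 2 * m ^ ((1 : ℝ) / 3) / (1 - t) ^ ((2 : ℝ) / 3) ≤ (k : ℝ)
    · exact branch1 hcase
    push_neg at hcase
    -- small k : use s_k ≤ k n ≤ m
    have hmt : (2 * (n : ℝ)) ^ ((3 : ℝ) / 2) ≤ m * (1 - t) := by
      rw [div_le_iff₀ htau0] at hyp
      linarith [hyp]
    have hm1 : (0 : ℝ) < m := by
      rcases lt_or_eq_of_le hm0 with hpos | heq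
      · exact hpos
      · exfalso
        have hpos2 : (0 : ℝ) < (2 * (n : ℝ)) ^ ((3 : ℝ) / 2) := Real.rpow_pos_of_pos (by linarith) _
        rw [← heq] at hmt
        simp only [zero_mul] at hmt
        linarith
    have hn2 : 2 * (n : ℝ) ≤ (m * (1 - t)) ^ ((2 : ℝ) / 3) := by
      have h1 : ((2 * (n : ℝ)) ^ ((3 : ℝ) / 2)) ^ ((2 : ℝ) / 3)
          ≤ (m * (1 - t)) ^ ((2 : ℝ) / 3) :=
        Real.rpow_le_rpow (Real.rpow_nonneg (by linarith) _) hmt (by norm_num)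
      rwa [← Real.rpow_mul (by linarith : (0:ℝ) ≤ 2 * n), show (3:ℝ)/2 * (2/3) = 1 by norm_num,
        Real.rpow_one] at h1
    have hkn : (k : ℝ) * n ≤ m := by
      have hsplit : (m * (1 - t)) ^ ((2 : ℝ) / 3) = m ^ ((2 : ℝ) / 3) * (1 - t) ^ ((2 : ℝ) / 3) :=
        Real.mul_rpow hm0 (le_of_lt htau0)
      have hpow : (0 : ℝ) < (1 - t) ^ ((2 : ℝ) / 3) := Real.rpow_pos_of_pos htau0 _
      have hkb : (k : ℝ) ≤ 2 * m ^ ((1 : ℝ) / 3) / (1 - t) ^ ((2 : ℝ) / 3) := le_of_lt hcase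
      have hnb : (n : ℝ) ≤ m ^ ((2 : ℝ) / 3) * (1 - t) ^ ((2 : ℝ) / 3) / 2 := by
        rw [← hsplit]; linarith
      have hk0' : (0 : ℝ) ≤ k := le_of_lt hk0
      have hn0' : (0 : ℝ) ≤ n := by linarith
      calc (k : ℝ) * n ≤ (2 * m ^ ((1 : ℝ) / 3) / (1 - t) ^ ((2 : ℝ) / 3))
            * (m ^ ((2 : ℝ) / 3) * (1 - t) ^ ((2 : ℝ) / 3) / 2) := by
            apply mul_le_mul hkb hnb hn0'
            positivity
        _ = m ^ ((1 : ℝ) / 3) * m ^ ((2 : ℝ) / 3) := by field_simp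
        _ = m := by
            rw [← Real.rpow_add hm1]
            norm_num
    rw [BC, ← hm]
    calc sLap G k ≤ k * n := by exact_mod_cast sLap_le_card_mul G k hk2
      _ ≤ m := hkn
      _ ≤ m + ((k + 1).choose 2 : ℝ) := by
          have : (0:ℝ) ≤ ((k + 1).choose 2 : ℝ) := Nat.cast_nonneg _
          linarith


end Brouwer
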